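/- Let $D \subset \mathbb{R}^3$ be a nonempty bounded open convex set, and let $p, p' \in \mathbb{R}^3 \setminus \overline{D}$ with $[p,p'] \cap \overline{D} = \emptyset$. Then the first reflector $\Lambda_{\partial D}(p,p') = \{q \in \partial D : |p-q|+|q-p'| = \min_{x \in \partial D}(|p-x|+|x-p'|)\}$ consists of exactly one point. -/

import Mathlib

open Set

private lemma frontier_hit {E : Type*} [TopologicalSpace E] {s t : Set E}
    (hs : IsPreconnected s) (ht : IsClosed t)
    (h1 : (s ∩ t).Nonempty) (h2 : (s \ t).Nonempty) :
    (s ∩ frontier t).Nonempty := by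
  by_contra hc
  rw [Set.not_nonempty_iff_eq_empty] at hc
  have hsub : s ⊆ interior t ∪ tᶜ := by
    intro x hx
    by_cases hxt : x ∈ t
    · left
      by_contra hxi
      have hfr : x ∈ frontier t := ⟨subset_closure hxt, hxi⟩
      exact absurd (hc ▸ (show x ∈ s ∩ frontier t from ⟨hx, hfr⟩)) (Set.notMem_empty x)
    · exact Or.inr hxt
  have hdisj : Disjoint (interior t) tᶜ :=
    disjoint_compl_right.mono_left interior_subset
  rcases hs.subset_or_subset isOpen_interior ht.isOpen_compl hdisj hsub with h | h
  · obtain ⟨x, hx, hxt⟩ := h2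
    exact hxt (interior_subset (h hx))
  · obtain ⟨x, hx1, hx2⟩ := h1
    exact (h hx1) hx2

private lemma key_unique {D : Set (EuclideanSpace ℝ (Fin 3))} {p p' q q' : EuclideanSpace ℝ (Fin 3)}
    (hDc : Convex ℝ D)
    (hp : p ∉ closure D) (hp' : p' ∉ closure D)
    (hseg : segment ℝ p p' ∩ closure D = ∅)
    (hq : q ∈ frontier D) (hq' : q' ∈ frontier D)
    (hmin : ∀ x ∈ frontier D, ‖p - q‖ + ‖q - p'‖ ≤ ‖p - x‖ + ‖x - p'‖)
    (heq : ‖p - q‖ + ‖q - p'‖ = ‖p - q'‖ + ‖q' - p'‖)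
    (hne : q ≠ q') : False := by
  have hqc : q ∈ closure D := frontier_subset_closure hq
  have hq'c : q' ∈ closure D := frontier_subset_closure hq'
  set m : EuclideanSpace ℝ (Fin 3) := midpoint ℝ q q' with hm
  have hmD : m ∈ closure D :=
    (hDc.closure).segment_subset hqc hq'c (midpoint_mem_segment q q')
  have hmeq1 : p - m = (2:ℝ)⁻¹ • ((p - q) + (p - q')) := by
    rw [hm, midpoint_eq_smul_add, invOf_eq_inv]; module
  have hmeq2 : m - p' = (2:ℝ)⁻¹ • ((q - p') + (q' - p')) := by
    rw [hm, midpoint_eq_smul_add, invOf_eq_inv]; module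
  have hn1 : ‖p - m‖ = ‖(p - q) + (p - q')‖ / 2 := by
    rw [hmeq1, norm_smul]; simp [norm_inv]; ring
  have hn2 : ‖m - p'‖ = ‖(q - p') + (q' - p')‖ / 2 := by
    rw [hmeq2, norm_smul]; simp [norm_inv]; ring
  have ht1 : ‖(p - q) + (p - q')‖ ≤ ‖p - q‖ + ‖p - q'‖ := norm_add_le _ _
  have ht2 : ‖(q - p') + (q' - p')‖ ≤ ‖q - p'‖ + ‖q' - p'‖ := norm_add_le _ _
  -- the minimal value
  set c : ℝ := ‖p - q‖ + ‖q - p'‖ with hc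
  have hfm_le : ‖p - m‖ + ‖m - p'‖ ≤ c := by
    rw [hn1, hn2]; rw [hc]; linarith
  -- find a frontier point on the segment from p to m with value ≤ value at m
  obtain ⟨w, hwseg, hwfr⟩ : ∃ w, w ∈ segment ℝ p m ∧ w ∈ frontier (closure D) := by
    obtain ⟨w, hw1, hw2⟩ := frontier_hit (E := EuclideanSpace ℝ (Fin 3))
      (convex_segment p m).isPreconnected isClosed_closure
      ⟨m, right_mem_segment ℝ p m, hmD⟩ ⟨p, left_mem_segment ℝ p m, hp⟩
    exact ⟨w, hw1, hw2⟩
  have hwfrD : w ∈ frontier D := frontier_closure_subset hwfr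
  have hwdist : ‖p - w‖ + ‖w - m‖ = ‖p - m‖ := by
    have := dist_add_dist_of_mem_segment hwseg
    simpa [dist_eq_norm] using this
  have hwtri : ‖w - p'‖ ≤ ‖w - m‖ + ‖m - p'‖ := by
    have := norm_add_le (w - m) (m - p')
    rwa [sub_add_sub_cancel] at this
  have hwmin : c ≤ ‖p - w‖ + ‖w - p'‖ := hmin w hwfrD
  -- hence value at m equals c, and all triangle inequalities are equalities
  have hfm_eq : ‖p - m‖ + ‖m - p'‖ = c := by linarith
  rw [hn1, hn2] at hfm_eq
  have he1 : ‖(p - q) + (p - q')‖ = ‖p - q‖ + ‖p - q'‖ := by linarith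
  have he2 : ‖(q - p') + (q' - p')‖ = ‖q - p'‖ + ‖q' - p'‖ := by linarith
  -- nonvanishing
  have hpq : p - q ≠ 0 := sub_ne_zero.mpr (fun h => hp (h ▸ hqc))
  have hpq' : p - q' ≠ 0 := sub_ne_zero.mpr (fun h => hp (h ▸ hq'c))
  have hqp' : q - p' ≠ 0 := sub_ne_zero.mpr (fun h => hp' (h ▸ hqc))
  have hq'p' : q' - p' ≠ 0 := sub_ne_zero.mpr (fun h => hp' (h ▸ hq'c))
  -- same ray conclusions from strict convexity
  have hray1 : SameRay ℝ (p - q) (p - q') := sameRay_iff_norm_add.mpr he1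
  have hray2 : SameRay ℝ (q - p') (q' - p') := sameRay_iff_norm_add.mpr he2
  obtain ⟨a, ha, haeq⟩ := hray1.exists_pos_right hpq hpq'
  obtain ⟨b, hb, hbeq⟩ := hray2.exists_pos_right hqp' hq'p'
  set A : ℝ := ‖p - q'‖ with hA
  set B : ℝ := ‖q' - p'‖ with hB
  have hApos : 0 < A := norm_pos_iff.mpr hpq'
  have hBpos : 0 < B := norm_pos_iff.mpr hq'p'
  have hnormA : ‖p - q‖ = a * A := by rw [haeq, norm_smul, Real.norm_eq_abs, abs_of_pos ha]
  have hnormB : ‖q - p'‖ = b * B := by rw [hbeq, norm_smul, Real.norm_eq_abs, abs_of_pos hb]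
  have hscal : a * A + b * B = A + B := by rw [← hnormA, ← hnormB, ← hc]; exact heq
  -- q - q' expressed two ways
  have e1 : q - q' = (1 - a) • (p - q') := by
    rw [sub_smul, one_smul, ← haeq]; abel
  have e2 : q - q' = (b - 1) • (q' - p') := by
    rw [sub_smul, one_smul, ← hbeq]; abel
  have hane : a ≠ 1 := by
    intro h
    have h2 : b * B = B := by rw [h] at hscal; linarith
    have h3 : (b - 1) * B = 0 := by linear_combination h2
    have hb1 : b = 1 := by
      rcases mul_eq_zero.mp h3 with h' | h'
      · linarith
      · exact absurd h' hBpos.ne'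
    apply hne
    have h4 := e2
    rw [hb1] at h4
    simpa [sub_eq_zero] using h4
  -- combine to get p - q' proportional to q' - p'
  have ecomb : (1 - a) • (p - q') = (b - 1) • (q' - p') := by rw [← e1, ← e2]
  have hb1 : b - 1 = (1 - a) * A / B := by
    have : (a - 1) * A = (1 - b) * B := by linarith
    field_simp
    linarith
  have hprop : p - q' = (A / B) • (q' - p') := by
    have h1a : (1 - a) ≠ 0 := by
      intro h; apply hane; linarith [sub_eq_zero.mp h]
    have : (1 - a) • (p - q') = (1 - a) • ((A / B) • (q' - p')) := by
      rw [ecomb, hb1, smul_smul]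
      congr 1
      field_simp
    exact smul_right_injective _ h1a this
  -- q' lies on the segment [p, p']
  have hkey : (A + B) • q' = B • p + A • p' := by
    have hB0 : B ≠ 0 := hBpos.ne'
    have := congrArg (fun v => B • v) hprop
    simp only [smul_smul] at this
    rw [mul_div_cancel₀ _ hB0] at this
    -- this : B • (p - q') = A • (q' - p')
    have h2 : B • p - B • q' = A • q' - A • p' := by
      rw [smul_sub, smul_sub] at this; linear_combination (norm := module) this
    have h3 : (A + B) • q' = A • q' + B • q' := by rw [add_smul]
    rw [h3]
    linear_combination (norm := module) -h2
  have hAB : A + B ≠ 0 := by positivity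
  have hmem : q' ∈ segment ℝ p p' := by
    refine ⟨B / (A + B), A / (A + B), by positivity, by positivity, ?_, ?_⟩
    · rw [← add_div, add_comm B A]
      exact div_self hAB
    · have hs1 : (A + B) * (B / (A + B)) = B := by field_simp
      have hs2 : (A + B) * (A / (A + B)) = A := by field_simp
      have h5 : (A + B) • ((B / (A + B)) • p + (A / (A + B)) • p') = (A + B) • q' := by
        rw [hkey, smul_add, smul_smul, smul_smul, hs1, hs2]
      exact smul_right_injective _ hAB h5
  have : q' ∈ segment ℝ p p' ∩ closure D := ⟨hmem, hq'c⟩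
  rw [hseg] at this
  exact this

theorem stmt15 (D : Set (EuclideanSpace ℝ (Fin 3))) (p p' : EuclideanSpace ℝ (Fin 3))
    (hD : D.Nonempty) (hDo : IsOpen D) (hDb : Bornology.IsBounded D)
    (hDc : Convex ℝ D)
    (hp : p ∉ closure D) (hp' : p' ∉ closure D)
    (hseg : segment ℝ p p' ∩ closure D = ∅) :
    ∃! q, q ∈ frontier D ∧
      ∀ x ∈ frontier D, ‖p - q‖ + ‖q - p'‖ ≤ ‖p - x‖ + ‖x - p'‖ := by
  have hfr_ne : (frontier D).Nonempty := by
    rw [nonempty_frontier_iff]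
    exact ⟨hD, fun h => hp (subset_closure (h ▸ Set.mem_univ p))⟩
  have hfr_cpt : IsCompact (frontier D) :=
    Metric.isCompact_of_isClosed_isBounded isClosed_frontier
      (hDb.closure.subset frontier_subset_closure)
  have hfc : Continuous (fun x : EuclideanSpace ℝ (Fin 3) => ‖p - x‖ + ‖x - p'‖) := by
    fun_prop
  obtain ⟨q, hq, hqmin⟩ := hfr_cpt.exists_isMinOn hfr_ne hfc.continuousOn
  refine ⟨q, ⟨hq, fun x hx => hqmin hx⟩, ?_⟩
  rintro q' ⟨hq', hq'min⟩
  by_contra hne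
  have heq : ‖p - q‖ + ‖q - p'‖ = ‖p - q'‖ + ‖q' - p'‖ :=
    le_antisymm (hqmin hq') (hq'min q hq)
  exact key_unique hDc hp hp' hseg hq hq' (fun x hx => hqmin hx) heq (Ne.symm hne)
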